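/- arXiv:1905.06296 — 6 statements merged into one kernel-verified Lean document; each statement's English description precedes it below -/
import Mathlib

section
/- Let n ≥ 2 be an integer, let a1, a2, a3 ∈ Z_n, set a = a1 + a2 + a3, and suppose a is a unit of Z_n. Then for any positive integer k, there exists an exact k-coloring of Z_n with no rainbow solution to the equation a1·x1 + a2·x2 + a3·x3 = b if and only if there exists an exact k-coloring of Z_n with no rainbow solution to the equation a1·x1 + a2·x2 + a3·x3 = 0. -/
/-- A rainbow solution to `a₁x₁ + a₂x₂ + a₃x₃ = b` in `ZMod n` under coloring `c`. -/
def HasRainbowSolution {n r : ℕ} (a₁ a₂ a₃ b : ZMod n) (c : ZMod n → Fin r) : Prop :=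
  ∃ s₁ s₂ s₃ : ZMod n, a₁ * s₁ + a₂ * s₂ + a₃ * s₃ = b ∧
    c s₁ ≠ c s₂ ∧ c s₁ ≠ c s₃ ∧ c s₂ ≠ c s₃

lemma translate_aux {n k : ℕ} (a₁ a₂ a₃ b b' t : ZMod n)
    (ht : (a₁ + a₂ + a₃) * t + b' = b) :
    (∃ c : ZMod n → Fin k, Function.Surjective c ∧ ¬ HasRainbowSolution a₁ a₂ a₃ b c) →
    (∃ c : ZMod n → Fin k, Function.Surjective c ∧ ¬ HasRainbowSolution a₁ a₂ a₃ b' c) := by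
  rintro ⟨c, hsurj, hno⟩
  refine ⟨fun x => c (x + t), fun y => ?_, ?_⟩
  · obtain ⟨x, hx⟩ := hsurj y
    exact ⟨x - t, by simpa using hx⟩
  · rintro ⟨s₁, s₂, s₃, heq, h12, h13, h23⟩
    exact hno ⟨s₁ + t, s₂ + t, s₃ + t, by ring_nf; ring_nf at ht ⊢; linear_combination heq + ht,
      h12, h13, h23⟩

theorem stmt_0 (n : ℕ) (hn : 2 ≤ n) (a₁ a₂ a₃ b : ZMod n)
    (ha : IsUnit (a₁ + a₂ + a₃)) (k : ℕ) (hk : 0 < k) :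
    (∃ c : ZMod n → Fin k, Function.Surjective c ∧ ¬ HasRainbowSolution a₁ a₂ a₃ b c) ↔
    (∃ c : ZMod n → Fin k, Function.Surjective c ∧ ¬ HasRainbowSolution a₁ a₂ a₃ 0 c) := by
  obtain ⟨u, hu⟩ := ha
  set t : ZMod n := (↑u⁻¹ : ZMod n) * b with htdef
  have hat : (a₁ + a₂ + a₃) * t = b := by
    rw [htdef, ← hu, ← mul_assoc]
    simp [← Units.val_mul]
  constructor
  · exact translate_aux a₁ a₂ a₃ b 0 t (by rw [add_zero, hat])
  · exact translate_aux a₁ a₂ a₃ 0 b (-t) (by rw [mul_neg, hat]; ring)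
end

section
/- Let a1, a2, a3, b ∈ Z_3. The rainbow number rb(Z_3, eq(a1,a2,a3,b)) equals 3 if either (b = 0 and a_i = a_j for some i ≠ j) or (b ≠ 0 and a_i ≠ a_j for some i ≠ j), and equals 4 otherwise. -/
/-- The rainbow number of `ZMod n` for the equation `a₁x₁ + a₂x₂ + a₃x₃ = b`:
the least positive `r` such that every exact (surjective) `r`-coloring of `ZMod n`
admits a rainbow solution.  (If an exact `n`-coloring has no rainbow solution, then,
since there are no surjective colorings with more than `n` colors, this infimum
is `n + 1`, matching the convention.) -/
noncomputable def rb (n : ℕ) (a₁ a₂ a₃ b : ZMod n) : ℕ :=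
  sInf {r : ℕ | 0 < r ∧
    ∀ c : ZMod n → Fin r, Function.Surjective c → HasRainbowSolution a₁ a₂ a₃ b c}

instance {n r : ℕ} [NeZero n] (a₁ a₂ a₃ b : ZMod n) (c : ZMod n → Fin r) :
    Decidable (HasRainbowSolution a₁ a₂ a₃ b c) := by
  unfold HasRainbowSolution; infer_instance

lemma no_rainbow_one {n : ℕ} (a₁ a₂ a₃ b : ZMod n) (c : ZMod n → Fin 1) :
    ¬ HasRainbowSolution a₁ a₂ a₃ b c := by
  rintro ⟨s₁, s₂, s₃, -, h12, -, -⟩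
  exact h12 (Subsingleton.elim _ _)

lemma no_rainbow_two {n : ℕ} (a₁ a₂ a₃ b : ZMod n) (c : ZMod n → Fin 2) :
    ¬ HasRainbowSolution a₁ a₂ a₃ b c := by
  rintro ⟨s₁, s₂, s₃, -, h12, h13, h23⟩
  have : ∀ x y z : Fin 2, x ≠ y → x ≠ z → y ≠ z → False := by decide
  exact this _ _ _ h12 h13 h23

lemma rb_three_eq (a₁ a₂ a₃ b : ZMod 3) :
    rb 3 a₁ a₂ a₃ b =
      if ∀ c : ZMod 3 → Fin 3, Function.Surjective c → HasRainbowSolution a₁ a₂ a₃ b c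
      then 3 else 4 := by
  have h4 : (4 : ℕ) ∈ {r : ℕ | 0 < r ∧
      ∀ c : ZMod 3 → Fin r, Function.Surjective c → HasRainbowSolution a₁ a₂ a₃ b c} := by
    refine ⟨by norm_num, fun c hc => ?_⟩
    have := Fintype.card_le_of_surjective c hc
    simp [ZMod.card] at this
  by_cases hP : ∀ c : ZMod 3 → Fin 3, Function.Surjective c → HasRainbowSolution a₁ a₂ a₃ b c
  · rw [if_pos hP]
    refine le_antisymm (Nat.sInf_le ⟨by norm_num, hP⟩) (le_csInf ⟨4, h4⟩ ?_)
    rintro r ⟨hr0, hr⟩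
    by_contra h
    push_neg at h
    interval_cases r
    · exact no_rainbow_one a₁ a₂ a₃ b _ (hr (fun _ => 0) (fun y => ⟨0, Subsingleton.elim _ _⟩))
    · have hsurj : Function.Surjective (fun x : ZMod 3 => if x = 0 then (0 : Fin 2) else 1) := by
        decide
      exact no_rainbow_two a₁ a₂ a₃ b _ (hr _ hsurj)
  · rw [if_neg hP]
    refine le_antisymm (Nat.sInf_le h4) (le_csInf ⟨4, h4⟩ ?_)
    rintro r ⟨hr0, hr⟩
    by_contra h
    push_neg at h
    interval_cases r
    · exact no_rainbow_one a₁ a₂ a₃ b _ (hr (fun _ => 0) (fun y => ⟨0, Subsingleton.elim _ _⟩))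
    · have hsurj : Function.Surjective (fun x : ZMod 3 => if x = 0 then (0 : Fin 2) else 1) := by
        decide
      exact no_rainbow_two a₁ a₂ a₃ b _ (hr _ hsurj)
    · exact hP hr

lemma key_iff : ∀ a₁ a₂ a₃ b : ZMod 3,
    (∀ c : ZMod 3 → Fin 3, Function.Surjective c → HasRainbowSolution a₁ a₂ a₃ b c) ↔
      ((b = 0 ∧ (a₁ = a₂ ∨ a₁ = a₃ ∨ a₂ = a₃)) ∨
       (b ≠ 0 ∧ (a₁ ≠ a₂ ∨ a₁ ≠ a₃ ∨ a₂ ≠ a₃))) := by decide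

theorem stmt_2 (a₁ a₂ a₃ b : ZMod 3) :
    rb 3 a₁ a₂ a₃ b =
      if (b = 0 ∧ (a₁ = a₂ ∨ a₁ = a₃ ∨ a₂ = a₃)) ∨
         (b ≠ 0 ∧ (a₁ ≠ a₂ ∨ a₁ ≠ a₃ ∨ a₂ ≠ a₃)) then 3 else 4 := by
  rw [rb_three_eq, if_congr (key_iff a₁ a₂ a₃ b) rfl rfl]
end

section
/- If p ≥ 5 is a prime, a is a unit of Z_p, and b ∈ Z_p, then rb(Z_p, eq(a,a,a,b)) = 4. -/
namespace Stmt5Aux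

/-- `x` "beats" `y` (for the equation `s₁+s₂+s₃ = d` and coloring `c`). -/
def Bts {p : ℕ} (c : ZMod p → Fin 4) (d x y : ZMod p) : Prop :=
  c x ≠ c y ∧ c (d - x - y) = c x

section

variable {p : ℕ} {c : ZMod p → Fin 4} {d : ZMod p}

/-- The translation hammer: a nonempty proper subset of `ZMod p` (p prime) closed
under adding `g` forces `g = 0`. -/
lemma hammer (hp : p.Prime) {P : ZMod p → Prop} (hS : ∃ w, P w) (hS' : ∃ v, ¬ P v)
    {g : ZMod p} (h : ∀ x, P x → P (x + g)) : g = 0 := by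
  haveI : Fact p.Prime := ⟨hp⟩
  haveI : NeZero p := ⟨hp.pos.ne'⟩
  by_contra hg
  obtain ⟨w0, hw0⟩ := hS
  obtain ⟨v, hv⟩ := hS'
  have hn : ∀ n : ℕ, P (w0 + (n : ZMod p) * g) := by
    intro n
    induction n with
    | zero => simpa using hw0
    | succ m ih =>
        have h2 := h _ ih
        have e : w0 + (m : ZMod p) * g + g = w0 + ((m+1 : ℕ) : ZMod p) * g := by
          push_cast; ring
        rwa [e] at h2
  apply hv
  have hk : ((((v - w0) * g⁻¹).val : ℕ) : ZMod p) = (v - w0) * g⁻¹ :=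
    ZMod.natCast_rightInverse _
  have hv' : w0 + ((((v - w0) * g⁻¹).val : ℕ) : ZMod p) * g = v := by
    rw [hk, mul_assoc, inv_mul_cancel₀ hg, mul_one]; ring
  rw [← hv']
  exact hn _

lemma bts_total (hF0 : ∀ x y : ZMod p, c x ≠ c y →
      c (d - x - y) = c x ∨ c (d - x - y) = c y)
    {x y : ZMod p} (h : c x ≠ c y) : Bts c d x y ∨ Bts c d y x := by
  rcases hF0 x y h with h1 | h1
  · exact Or.inl ⟨h, h1⟩
  · exact Or.inr ⟨h.symm, by rw [sub_right_comm]; exact h1⟩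

lemma bts_asymm {x y : ZMod p} (h1 : Bts c d x y) (h2 : Bts c d y x) : False := by
  apply h1.1
  have e : d - y - x = d - x - y := sub_right_comm d y x
  rw [← h1.2, ← h2.2, e]

/-- No directed 3-cycle on three distinct color classes. -/
lemma no_cycle (hp : p.Prime) (hsurj : Function.Surjective c)
    (hF0 : ∀ x y : ZMod p, c x ≠ c y →
      c (d - x - y) = c x ∨ c (d - x - y) = c y)
    {x y z : ZMod p} (b1 : Bts c d x y) (b2 : Bts c d y z) (b3 : Bts c d z x) : False := by
  have hxy : c x ≠ c y := b1.1
  have hyz : c y ≠ c z := b2.1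
  have hzx : c z ≠ c x := b3.1
  obtain ⟨i4, hi4x, hi4y, hi4z⟩ : ∃ i : Fin 4, i ≠ c x ∧ i ≠ c y ∧ i ≠ c z := by
    have : ∀ u v w : Fin 4, ∃ i, i ≠ u ∧ i ≠ v ∧ i ≠ w := by decide
    exact this _ _ _
  have SL : ∀ w : ZMod p, c w = i4 → c (d - x - w) = i4 ∧ c (d - y - w) = i4 := by
    intro w hw
    have hwx : c w ≠ c x := by rw [hw]; exact hi4x
    have hwy : c w ≠ c y := by rw [hw]; exact hi4y
    have hwz : c w ≠ c z := by rw [hw]; exact hi4z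
    have hu1 := hF0 w x hwx
    have hu2 := hF0 w y hwy
    have hu3 := hF0 w z hwz
    rw [hw] at hu1 hu2 hu3
    have hv1 : c (d - y - z) = c y := b2.2
    have hv2 : c (d - z - x) = c z := b3.2
    have hv3 : c (d - x - y) = c x := b1.2
    have h1 : c (w + x + y + z - d) = c (d - w - x) ∨ c (w + x + y + z - d) = c y := by
      have hne : c (d - w - x) ≠ c (d - y - z) := by
        rw [hv1]
        rcases hu1 with h | h <;> rw [h]
        · exact hi4y
        · exact hxy
      have h' := hF0 _ _ hne
      rw [hv1] at h'
      rwa [show d - (d - w - x) - (d - y - z) = w + x + y + z - d by ring] at h'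
    have h2 : c (w + x + y + z - d) = c (d - w - y) ∨ c (w + x + y + z - d) = c z := by
      have hne : c (d - w - y) ≠ c (d - z - x) := by
        rw [hv2]
        rcases hu2 with h | h <;> rw [h]
        · exact hi4z
        · exact hyz
      have h' := hF0 _ _ hne
      rw [hv2] at h'
      rwa [show d - (d - w - y) - (d - z - x) = w + x + y + z - d by ring] at h'
    have h3 : c (w + x + y + z - d) = c (d - w - z) ∨ c (w + x + y + z - d) = c x := by
      have hne : c (d - w - z) ≠ c (d - x - y) := by
        rw [hv3]
        rcases hu3 with h | h <;> rw [h]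
        · exact hi4x
        · exact hzx
      have h' := hF0 _ _ hne
      rw [hv3] at h'
      rwa [show d - (d - w - z) - (d - x - y) = w + x + y + z - d by ring] at h'
    have hcT : c (w + x + y + z - d) = i4 := by
      rcases h1 with h1' | h1'
      · rcases hu1 with h | h
        · rw [h] at h1'; exact h1'
        · rw [h] at h1'
          exfalso
          rcases h2 with h2' | h2'
          · rcases hu2 with h'' | h''
            · rw [h''] at h2'; exact hi4x (h2'.symm.trans h1')
            · rw [h''] at h2'; exact hxy (h1'.symm.trans h2')
          · exact hzx (h2'.symm.trans h1')
      · exfalso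
        rcases h3 with h3' | h3'
        · rcases hu3 with h'' | h''
          · rw [h''] at h3'; exact hi4y (h3'.symm.trans h1')
          · rw [h''] at h3'; exact hyz (h1'.symm.trans h3')
        · exact hxy (h3'.symm.trans h1')
    have ha1 : c (d - w - x) = i4 := by
      rcases h1 with h1' | h1'
      · rw [hcT] at h1'; exact h1'.symm
      · rw [hcT] at h1'; exact absurd h1'.symm (Ne.symm hi4y)
    have ha2 : c (d - w - y) = i4 := by
      rcases h2 with h2' | h2'
      · rw [hcT] at h2'; exact h2'.symm
      · rw [hcT] at h2'; exact absurd h2'.symm (Ne.symm hi4z)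
    exact ⟨by rw [sub_right_comm]; exact ha1, by rw [sub_right_comm]; exact ha2⟩
  have hmap : ∀ w : ZMod p, c w = i4 → c (w + (x - y)) = i4 := by
    intro w hw
    have k1 := (SL w hw).1
    have k2 := (SL (d - x - w) k1).2
    rwa [show d - y - (d - x - w) = w + (x - y) by ring] at k2
  obtain ⟨w0, hw0⟩ := hsurj i4
  have h0 : x - y = 0 :=
    hammer hp ⟨w0, hw0⟩ ⟨x, fun h => hi4x h.symm⟩ hmap
  exact hxy (by rw [sub_eq_zero] at h0; rw [h0])

lemma bts_trans (hp : p.Prime) (hsurj : Function.Surjective c)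
    (hF0 : ∀ x y : ZMod p, c x ≠ c y →
      c (d - x - y) = c x ∨ c (d - x - y) = c y)
    {x y z : ZMod p} (hxz : c x ≠ c z)
    (b1 : Bts c d x y) (b2 : Bts c d y z) : Bts c d x z := by
  rcases bts_total hF0 hxz with h | h
  · exact h
  · exact (no_cycle hp hsurj hF0 b1 b2 h).elim

/-- Two elements each beaten by all of a (nonempty, proper) color class coincide. -/
lemma key1 (hp : p.Prime) {i : Fin 4} (hW : ∃ w, c w = i) (hW' : ∃ v, c v ≠ i)
    {x y : ZMod p}
    (hx : ∀ w, c w = i → c (d - x - w) = i) (hy : ∀ w, c w = i → c (d - y - w) = i) :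
    x = y := by
  have hmap : ∀ w, c w = i → c (w + (x - y)) = i := by
    intro w hw
    have h2 := hy (d - x - w) (hx w hw)
    rwa [show d - y - (d - x - w) = w + (x - y) by ring] at h2
  have h0 := hammer hp hW hW' hmap
  rwa [sub_eq_zero] at h0

/-- Propagation: an element beaten by a full color class beats nothing. -/
lemma bottom (hp : p.Prime) (hsurj : Function.Surjective c)
    (hF0 : ∀ x y : ZMod p, c x ≠ c y →
      c (d - x - y) = c x ∨ c (d - x - y) = c y)
    {x : ZMod p} {i : Fin 4} (hxi : c x ≠ i)
    (h : ∀ w, c w = i → Bts c d w x) : ∀ y, ¬ Bts c d x y := by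
  intro y hby
  have hxy : c x ≠ c y := hby.1
  have hyi : c y ≠ i := by
    intro h'
    exact bts_asymm (h y h') hby
  have hy : ∀ w, c w = i → Bts c d w y := by
    intro w hw
    have hwy : c w ≠ c y := by rw [hw]; exact fun hh => hyi hh.symm
    exact bts_trans hp hsurj hF0 hwy (h w hw) hby
  have hx' : ∀ w, c w = i → c (d - x - w) = i := by
    intro w hw
    have h2 := (h w hw).2
    rw [hw] at h2
    rwa [sub_right_comm] at h2
  have hy' : ∀ w, c w = i → c (d - y - w) = i := by
    intro w hw
    have h2 := (hy w hw).2
    rw [hw] at h2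
    rwa [sub_right_comm] at h2
  have hxyeq : x = y := key1 hp (hsurj i) ⟨x, hxi⟩ hx' hy'
  exact hxy (by rw [hxyeq])

/-- Among three designated color classes there is a "global bottom" element. -/
lemma claim (hp : p.Prime) (hsurj : Function.Surjective c)
    (hF0 : ∀ x y : ZMod p, c x ≠ c y →
      c (d - x - y) = c x ∨ c (d - x - y) = c y)
    {i j k : Fin 4} (hij : i ≠ j) (hik : i ≠ k) (hjk : j ≠ k) :
    ∃ t, (c t = i ∨ c t = j ∨ c t = k) ∧ ∀ y, ¬ Bts c d t y := by
  classical
  haveI : NeZero p := ⟨hp.pos.ne'⟩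
  haveI : Fintype (ZMod p) := ZMod.fintype p
  set D : ZMod p → Finset (ZMod p) :=
    fun u => Finset.univ.filter (fun w => c w = k ∧ c (d - w - u) = c w) with hD
  have hDbts : ∀ u w, c u ≠ k → (w ∈ D u ↔ (c w = k ∧ Bts c d w u)) := by
    intro u w hu
    rw [hD]
    simp only [Finset.mem_filter, Finset.mem_univ, true_and]
    constructor
    · rintro ⟨e1, e2⟩
      exact ⟨e1, ⟨by rw [e1]; exact fun hh => hu hh.symm, e2⟩⟩
    · rintro ⟨e1, e2⟩
      exact ⟨e1, e2.2⟩
  set YZ : Finset (ZMod p) := Finset.univ.filter (fun u => c u = i ∨ c u = j) with hYZ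
  obtain ⟨wi, hwi⟩ := hsurj i
  have hYZne : YZ.Nonempty := ⟨wi, by simp [hYZ, hwi]⟩
  obtain ⟨u0, hu0mem, hu0max⟩ := Finset.exists_max_image YZ (fun u => (D u).card) hYZne
  have hcu0 : c u0 = i ∨ c u0 = j := by
    simpa [hYZ] using hu0mem
  have hu0k : c u0 ≠ k := by
    rcases hcu0 with h | h <;> rw [h]
    · exact hik
    · exact hjk
  by_cases hfull : ∀ w, c w = k → Bts c d w u0
  · refine ⟨u0, ?_, bottom hp hsurj hF0 hu0k hfull⟩
    rcases hcu0 with h | h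
    · exact Or.inl h
    · exact Or.inr (Or.inl h)
  · push_neg at hfull
    obtain ⟨α, hαk, hαnb⟩ := hfull
    obtain ⟨j', hj'1, hj'2, hj'3⟩ : ∃ j', (j' = i ∨ j' = j) ∧ c u0 ≠ j' ∧ j' ≠ k := by
      rcases hcu0 with h | h
      · exact ⟨j, Or.inr rfl, by rw [h]; exact hij, hjk⟩
      · exact ⟨i, Or.inl rfl, by rw [h]; exact Ne.symm hij, hik⟩
    have hvα : ∀ v, c v = j' → Bts c d v α := by
      intro v hv
      have hvk : c v ≠ k := by rw [hv]; exact hj'3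
      have hvu0 : c u0 ≠ c v := by rw [hv]; exact hj'2
      have hsub : D v ⊆ D u0 := by
        have hcomp : D v ⊆ D u0 ∨ D u0 ⊆ D v := by
          by_contra hcon
          push_neg at hcon
          obtain ⟨hc1, hc2⟩ := hcon
          rw [Finset.not_subset] at hc1 hc2
          obtain ⟨w1, hw1v, hw1u⟩ := hc1
          obtain ⟨w2, hw2u, hw2v⟩ := hc2
          rw [hDbts v w1 hvk] at hw1v
          rw [hDbts u0 w2 hu0k] at hw2u
          have hw1k := hw1v.1
          have hw2k := hw2u.1
          have hnb1 : ¬ Bts c d w1 u0 := fun hb =>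
            hw1u ((hDbts u0 w1 hu0k).2 ⟨hw1k, hb⟩)
          have hnb2 : ¬ Bts c d w2 v := fun hb =>
            hw2v ((hDbts v w2 hvk).2 ⟨hw2k, hb⟩)
          have hbu0w1 : Bts c d u0 w1 := by
            rcases bts_total hF0 (show c u0 ≠ c w1 by rw [hw1k]; exact hu0k) with h | h
            · exact h
            · exact absurd h hnb1
          have hbvw2 : Bts c d v w2 := by
            rcases bts_total hF0 (show c v ≠ c w2 by rw [hw2k]; exact hvk) with h | h
            · exact h
            · exact absurd h hnb2
          have hbu0v : Bts c d u0 v := bts_trans hp hsurj hF0 hvu0 hbu0w1 hw1v.2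
          have hbvu0 : Bts c d v u0 := bts_trans hp hsurj hF0 (Ne.symm hvu0) hbvw2 hw2u.2
          exact bts_asymm hbu0v hbvu0
        rcases hcomp with h | h
        · exact h
        · have hvmem : v ∈ YZ := by
            simp only [hYZ, Finset.mem_filter, Finset.mem_univ, true_and]
            rcases hj'1 with h' | h'
            · exact Or.inl (by rw [hv, h'])
            · exact Or.inr (by rw [hv, h'])
          have heq := Finset.eq_of_subset_of_card_le h (hu0max v hvmem)
          rw [heq]
      have hαv : ¬ Bts c d α v := by
        intro hb
        have hmem : α ∈ D v := (hDbts v α hvk).2 ⟨hαk, hb⟩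
        have hmem2 := hsub hmem
        rw [hDbts u0 α hu0k] at hmem2
        exact hαnb hmem2.2
      rcases bts_total hF0 (show c v ≠ c α by rw [hv, hαk]; exact hj'3) with h | h
      · exact h
      · exact absurd h hαv
    exact ⟨α, Or.inr (Or.inr hαk),
      bottom hp hsurj hF0 (by rw [hαk]; exact Ne.symm hj'3) hvα⟩

/-- Main upper-bound engine: no rainbow-free surjective 4-coloring exists. -/
lemma no_rf (hp : p.Prime) (hsurj : Function.Surjective c)
    (hF0 : ∀ x y : ZMod p, c x ≠ c y →
      c (d - x - y) = c x ∨ c (d - x - y) = c y) : False := by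
  obtain ⟨t1, _, hbot1⟩ :=
    claim hp hsurj hF0 (show (0:Fin 4) ≠ 1 by decide) (show (0:Fin 4) ≠ 2 by decide)
      (show (1:Fin 4) ≠ 2 by decide)
  obtain ⟨i, j, k, hij, hik, hjk, hi, hj, hk⟩ :
      ∃ i j k : Fin 4, i ≠ j ∧ i ≠ k ∧ j ≠ k ∧ i ≠ c t1 ∧ j ≠ c t1 ∧ k ≠ c t1 := by
    have : ∀ m : Fin 4, ∃ i j k : Fin 4,
        i ≠ j ∧ i ≠ k ∧ j ≠ k ∧ i ≠ m ∧ j ≠ m ∧ k ≠ m := by decide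
    exact this _
  obtain ⟨t2, hct2, hbot2⟩ := claim hp hsurj hF0 hij hik hjk
  have h12 : c t1 ≠ c t2 := by
    rcases hct2 with h | h | h <;> rw [h]
    · exact Ne.symm hi
    · exact Ne.symm hj
    · exact Ne.symm hk
  rcases bts_total hF0 h12 with h | h
  · exact hbot1 t2 h
  · exact hbot2 t1 h

end

end Stmt5Aux

namespace Stmt5Aux

/-- The rainbow-free 3-coloring: singleton `{e}`, the symmetric pair `{e-1, e+1}`, rest. -/
def col3 {p : ℕ} (e : ZMod p) : ZMod p → Fin 3 := fun x =>
  if x = e then 0 else if x = e + 1 then 1 else if x = e - 1 then 1 else 2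

section
variable {p : ℕ} {e : ZMod p}

lemma col3_eq_zero (h1 : (1 : ZMod p) ≠ 0) {x : ZMod p} (hx : col3 e x = 0) : x = e := by
  by_cases h : x = e
  · exact h
  exfalso
  unfold col3 at hx
  rw [if_neg h] at hx
  by_cases h2 : x = e + 1
  · rw [if_pos h2] at hx; exact (show (1:Fin 3) ≠ 0 by decide) hx
  rw [if_neg h2] at hx
  by_cases h3 : x = e - 1
  · rw [if_pos h3] at hx; exact (show (1:Fin 3) ≠ 0 by decide) hx
  · rw [if_neg h3] at hx; exact (show (2:Fin 3) ≠ 0 by decide) hx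

lemma col3_sym (h1 : (1 : ZMod p) ≠ 0) (h2 : (2 : ZMod p) ≠ 0)
    {y z : ZMod p} (hyz : y + z = 2 * e) : col3 e y = col3 e z := by
  have hy' : y = 2 * e - z := by rw [← hyz]; ring
  have hz' : z = 2 * e - y := by rw [← hyz]; ring
  have hee1 : e + 1 ≠ e := by
    intro h; apply h1
    have : (e:ZMod p) + 1 - e = e - e := by rw [h]
    rwa [show (e:ZMod p) + 1 - e = 1 by ring, sub_self] at this
  have hem1 : e - 1 ≠ e := by
    intro h; apply h1
    have : e - (e - 1) = e - e := by rw [h]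
    rwa [show e - (e - 1) = (1:ZMod p) by ring, sub_self] at this
  have hpm : e + 1 ≠ e - 1 := by
    intro h; apply h2
    have : (e + 1) - (e - 1) = (e - 1) - (e - 1) := by rw [h]
    rwa [show (e + 1) - (e - 1) = (2:ZMod p) by ring, sub_self] at this
  by_cases hy1 : y = e
  · have hz1 : z = e := by rw [hz', hy1]; ring
    rw [hy1, hz1]
  by_cases hy2 : y = e + 1
  · have hz2 : z = e - 1 := by rw [hz', hy2]; ring
    rw [hy2, hz2]
    unfold col3
    rw [if_neg hee1, if_pos rfl, if_neg hem1, if_neg (Ne.symm hpm), if_pos rfl]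
  by_cases hy3 : y = e - 1
  · have hz3 : z = e + 1 := by rw [hz', hy3]; ring
    rw [hy3, hz3]
    unfold col3
    rw [if_neg hem1, if_neg (Ne.symm hpm), if_pos rfl, if_neg hee1, if_pos rfl]
  · have hz1 : z ≠ e := fun h => hy1 (by rw [hy', h]; ring)
    have hz2 : z ≠ e + 1 := fun h => hy3 (by rw [hy', h]; ring)
    have hz3 : z ≠ e - 1 := fun h => hy2 (by rw [hy', h]; ring)
    unfold col3
    rw [if_neg hy1, if_neg hy2, if_neg hy3, if_neg hz1, if_neg hz2, if_neg hz3]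

lemma col3_surj (h1 : (1 : ZMod p) ≠ 0) (h2 : (2 : ZMod p) ≠ 0) (h3 : (3 : ZMod p) ≠ 0) :
    Function.Surjective (col3 e) := by
  intro t
  fin_cases t
  · exact ⟨e, by unfold col3; rw [if_pos rfl]; rfl⟩
  · refine ⟨e + 1, ?_⟩
    unfold col3
    have hee1 : e + 1 ≠ e := by
      intro h; apply h1
      have : (e:ZMod p) + 1 - e = e - e := by rw [h]
      rwa [show (e:ZMod p) + 1 - e = 1 by ring, sub_self] at this
    rw [if_neg hee1, if_pos rfl]
    rfl
  · refine ⟨e + 2, ?_⟩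
    unfold col3
    have k1 : e + 2 ≠ e := by
      intro h; apply h2
      have : (e:ZMod p) + 2 - e = e - e := by rw [h]
      rwa [show (e:ZMod p) + 2 - e = 2 by ring, sub_self] at this
    have k2 : e + 2 ≠ e + 1 := by
      intro h; apply h1
      have : (e:ZMod p) + 2 - (e + 1) = (e + 1) - (e + 1) := by rw [h]
      rwa [show (e:ZMod p) + 2 - (e + 1) = 1 by ring, sub_self] at this
    have k3 : e + 2 ≠ e - 1 := by
      intro h; apply h3
      have : (e:ZMod p) + 2 - (e - 1) = (e - 1) - (e - 1) := by rw [h]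
      rwa [show (e:ZMod p) + 2 - (e - 1) = 3 by ring, sub_self] at this
    rw [if_neg k1, if_neg k2, if_neg k3]
    rfl

lemma col3_no_rainbow (h1 : (1 : ZMod p) ≠ 0) (h2 : (2 : ZMod p) ≠ 0)
    {x y z : ZMod p} (hsum : x + y + z = 3 * e) :
    ¬(col3 e x ≠ col3 e y ∧ col3 e x ≠ col3 e z ∧ col3 e y ≠ col3 e z) := by
  rintro ⟨d12, d13, d23⟩
  have f3 : ∀ u v w : Fin 3, u ≠ v → u ≠ w → v ≠ w → u = 0 ∨ v = 0 ∨ w = 0 := by decide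
  rcases f3 _ _ _ d12 d13 d23 with h | h | h
  · have hx := col3_eq_zero h1 h
    have hs : y + z = 2 * e := by rw [hx] at hsum; linear_combination hsum
    exact d23 (col3_sym h1 h2 hs)
  · have hy := col3_eq_zero h1 h
    have hs : x + z = 2 * e := by rw [hy] at hsum; linear_combination hsum
    exact d13 (col3_sym h1 h2 hs)
  · have hz := col3_eq_zero h1 h
    have hs : x + y = 2 * e := by rw [hz] at hsum; linear_combination hsum
    exact d12 (col3_sym h1 h2 hs)

end

end Stmt5Aux

theorem stmt_5 (p : ℕ) (hp : p.Prime) (hp5 : 5 ≤ p) (a b : ZMod p) (ha : IsUnit a) :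
    rb p a a a b = 4 := by
  haveI : Fact p.Prime := ⟨hp⟩
  haveI : NeZero p := ⟨hp.pos.ne'⟩
  have ha0 : a ≠ 0 := ha.ne_zero
  have hnz : ∀ n : ℕ, 0 < n → n < 5 → ((n : ℕ) : ZMod p) ≠ 0 := by
    intro n hn1 hn2 h
    rw [ZMod.natCast_eq_zero_iff] at h
    have := Nat.le_of_dvd hn1 h
    omega
  have h1 : (1 : ZMod p) ≠ 0 := by
    have := hnz 1 (by norm_num) (by norm_num); simpa using this
  have h2 : (2 : ZMod p) ≠ 0 := by
    have := hnz 2 (by norm_num) (by norm_num); simpa using this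
  have h3 : (3 : ZMod p) ≠ 0 := by
    have := hnz 3 (by norm_num) (by norm_num); simpa using this
  set d : ZMod p := a⁻¹ * b with hd
  set e : ZMod p := d * (3 : ZMod p)⁻¹ with he
  have h3e : 3 * e = d := by
    rw [he, mul_comm, mul_assoc, inv_mul_cancel₀ h3, mul_one]
  have hb : a * d = b := by
    rw [hd, ← mul_assoc, mul_inv_cancel₀ ha0, one_mul]
  have h4mem : 4 ∈ {r : ℕ | 0 < r ∧
      ∀ c : ZMod p → Fin r, Function.Surjective c → HasRainbowSolution a a a b c} := by
    refine ⟨by norm_num, ?_⟩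
    intro c hsurj
    by_contra hnr
    have hnr' : ∀ s1 s2 s3 : ZMod p, a * s1 + a * s2 + a * s3 = b →
        ¬(c s1 ≠ c s2 ∧ c s1 ≠ c s3 ∧ c s2 ≠ c s3) := by
      intro s1 s2 s3 heq hcon
      exact hnr ⟨s1, s2, s3, heq, hcon⟩
    have hF0 : ∀ x y : ZMod p, c x ≠ c y →
        c (d - x - y) = c x ∨ c (d - x - y) = c y := by
      intro x y hxy
      have heq : a * x + a * y + a * (d - x - y) = b := by
        rw [← hb]; ring
      by_contra hcon
      push_neg at hcon
      exact hnr' x y (d - x - y) heq ⟨hxy, Ne.symm hcon.1, Ne.symm hcon.2⟩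
    exact Stmt5Aux.no_rf hp hsurj hF0
  apply le_antisymm
  · exact Nat.sInf_le h4mem
  · apply le_csInf ⟨4, h4mem⟩
    rintro m ⟨hm0, hm⟩
    by_contra hlt
    push_neg at hlt
    interval_cases m
    · obtain ⟨s1, s2, s3, _, h12, _, _⟩ :=
        hm (fun _ => (0 : Fin 1)) (fun t => ⟨0, Subsingleton.elim _ _⟩)
      exact h12 rfl
    · have hsurj2 : Function.Surjective (fun x : ZMod p => if x = 0 then (0 : Fin 2) else 1) := by
        intro t
        fin_cases t
        · exact ⟨0, by simp⟩
        · exact ⟨1, by simp [h1]⟩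
      obtain ⟨s1, s2, s3, _, h12, h13, h23⟩ := hm _ hsurj2
      exact (show ∀ u v w : Fin 2, u ≠ v → u ≠ w → v ≠ w → False by decide)
        _ _ _ h12 h13 h23
    · obtain ⟨s1, s2, s3, heq, h12, h13, h23⟩ :=
        hm (Stmt5Aux.col3 e) (Stmt5Aux.col3_surj h1 h2 h3)
      have hsum : s1 + s2 + s3 = 3 * e := by
        have hc : a * (s1 + s2 + s3) = a * (3 * e) := by
          calc a * (s1 + s2 + s3) = a * s1 + a * s2 + a * s3 := by ring
          _ = b := heq
          _ = a * d := hb.symm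
          _ = a * (3 * e) := by rw [h3e]
        exact mul_left_cancel₀ ha0 hc
      exact Stmt5Aux.col3_no_rainbow h1 h2 hsum ⟨h12, h13, h23⟩
end

section
/- Let α ≥ 1 be an integer and let a1, a2, a3, b be integers such that a1, a2, a3 are all odd. Then rb(Z_{2^α}, eq(a1,a2,a3,b)) = α + 2. -/
lemma odd_isUnit_zmod {n : ℕ} {a : ℤ} (h : Odd a) : IsUnit ((a : ZMod (2^n))) := by
  obtain ⟨k, rfl⟩ := h
  have h2 : IsNilpotent ((2:ZMod (2^n)) * (k : ZMod (2^n))) := by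
    refine ⟨n, ?_⟩
    rw [mul_pow]
    have h0 : (2:ZMod (2^n))^n = ((2^n : ℕ) : ZMod (2^n)) := by push_cast; ring
    rw [h0, ZMod.natCast_self, zero_mul]
  have hu := h2.isUnit_one_add
  have e : ((2*k+1 : ℤ) : ZMod (2^n)) = 1 + (2:ZMod (2^n)) * (k:ZMod (2^n)) := by
    push_cast; ring
  rw [e]; exact hu

lemma odd_coprime_two {a : ℤ} (h : Odd a) : IsCoprime (2:ℤ) a := by
  obtain ⟨k, rfl⟩ := h
  exact ⟨-k, 1, by ring⟩

/-- 2-adic valuation on `ZMod (2^α)`, with `v2 α 0 = α`. -/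
def v2 (α : ℕ) (x : ZMod (2^α)) : ℕ := if x = 0 then α else padicValNat 2 x.val

lemma key (α : ℕ) {a₁ a₂ a₃ : ℤ} (h₁ : Odd a₁) (h₂ : Odd a₂) (h₃ : Odd a₃)
    (u₁ u₂ u₃ : ZMod (2^α))
    (hv2 : v2 α u₁ < v2 α u₂) (hv3 : v2 α u₁ < v2 α u₃) (hvα : v2 α u₁ < α) :
    (a₁ : ZMod (2^α)) * u₁ + a₂ * u₂ + a₃ * u₃ ≠ 0 := by
  intro h
  set j := v2 α u₁ with hj
  have hu₁0 : u₁ ≠ 0 := by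
    intro e; rw [hj] at hvα; simp [v2, e] at hvα
  have hjval : j = padicValNat 2 u₁.val := by simp [hj, v2, hu₁0]
  have hsum : ((2:ℤ)^α) ∣ (a₁ * u₁.val + a₂ * u₂.val + a₃ * u₃.val) := by
    have hz : ((a₁ * (u₁.val:ℤ) + a₂ * u₂.val + a₃ * u₃.val : ℤ) : ZMod (2^α)) = 0 := by
      push_cast
      simp only [ZMod.natCast_val, ZMod.cast_id]
      exact h
    have := (ZMod.intCast_zmod_eq_zero_iff_dvd _ (2^α)).mp hz
    exact_mod_cast this
  have hd : ∀ (a : ℤ) (u : ZMod (2^α)), j < v2 α u → ((2:ℤ)^(j+1)) ∣ a * u.val := by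
    intro a u hu
    by_cases h0 : u = 0
    · simp [h0, ZMod.val_zero]
    · have hle : j + 1 ≤ padicValNat 2 u.val := by
        simp only [v2, h0, if_false] at hu; omega
      have hdn : (2:ℕ)^(j+1) ∣ u.val :=
        dvd_trans (pow_dvd_pow 2 hle) pow_padicValNat_dvd
      exact Dvd.dvd.mul_left (by exact_mod_cast hdn) a
  have hd2 := hd a₂ u₂ hv2
  have hd3 := hd a₃ u₃ hv3
  have hsum' : ((2:ℤ)^(j+1)) ∣ (a₁ * u₁.val + a₂ * u₂.val + a₃ * u₃.val) :=
    dvd_trans (pow_dvd_pow 2 (by omega)) hsum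
  have h1 : ((2:ℤ)^(j+1)) ∣ a₁ * u₁.val := by
    have := dvd_sub (dvd_sub hsum' hd3) hd2
    simpa using this
  have hcop : IsCoprime ((2:ℤ)^(j+1)) a₁ := (odd_coprime_two h₁).pow_left
  have hdu : ((2:ℤ)^(j+1)) ∣ (u₁.val : ℤ) := hcop.dvd_of_dvd_mul_left h1
  have hdn : (2:ℕ)^(j+1) ∣ u₁.val := by exact_mod_cast hdu
  rcases (padicValNat_dvd_iff (j+1) u₁.val).mp hdn with h0 | hle
  · exact hu₁0 (by
      have : u₁.val = 0 := h0
      exact (ZMod.val_eq_zero u₁).mp this)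
  · omega

lemma homog {a₁ a₂ a₃ : ℤ} (h₁ : Odd a₁) (h₂ : Odd a₂) (h₃ : Odd a₃) {r : ℕ} :
    ∀ α (c : ZMod (2^α) → Fin r),
      ¬ HasRainbowSolution (a₁ : ZMod (2^α)) (a₂ : ZMod (2^α)) (a₃ : ZMod (2^α)) 0 c →
      (Finset.univ.image c).card ≤ α + 1 := by
  intro α
  induction α with
  | zero =>
    intro c _
    calc (Finset.univ.image c).card ≤ Finset.univ.card := Finset.card_image_le
    _ ≤ 1 := by simp [Finset.card_univ, ZMod.card]
  | succ α ih =>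
    intro c hnr
    set ψ : ZMod (2^α) → ZMod (2^(α+1)) := fun x => 2 * (x.val : ZMod (2^(α+1))) with hψ
    have factA : ∀ u v w : ZMod (2^α), (a₁:ZMod (2^α))*u + (a₂:ZMod (2^α))*v + (a₃:ZMod (2^α))*w = 0 →
        (a₁:ZMod (2^(α+1)))*(ψ u) + (a₂:ZMod (2^(α+1)))*(ψ v) + (a₃:ZMod (2^(α+1)))*(ψ w) = 0 := by
      intro u v w huv
      have hdvd : ((2:ℤ)^α) ∣ (a₁ * u.val + a₂ * v.val + a₃ * w.val) := by
        have hz : ((a₁ * (u.val:ℤ) + a₂ * v.val + a₃ * w.val : ℤ) : ZMod (2^α)) = 0 := by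
          push_cast
          simp only [ZMod.natCast_val, ZMod.cast_id]
          exact huv
        have := (ZMod.intCast_zmod_eq_zero_iff_dvd _ (2^α)).mp hz
        exact_mod_cast this
      have hdvd2 : ((2:ℤ)^(α+1)) ∣ 2*(a₁ * u.val + a₂ * v.val + a₃ * w.val) := by
        rw [pow_succ, mul_comm ((2:ℤ)^α) 2]
        exact mul_dvd_mul_left 2 hdvd
      have hz2 : ((2*(a₁ * (u.val:ℤ) + a₂ * v.val + a₃ * w.val) : ℤ) : ZMod (2^(α+1))) = 0 := by
        rw [ZMod.intCast_zmod_eq_zero_iff_dvd]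
        exact_mod_cast hdvd2
      calc (a₁:ZMod (2^(α+1)))*(ψ u) + (a₂:ZMod (2^(α+1)))*(ψ v) + (a₃:ZMod (2^(α+1)))*(ψ w)
          = ((2*(a₁ * (u.val:ℤ) + a₂ * v.val + a₃ * w.val) : ℤ) : ZMod (2^(α+1))) := by
            simp only [hψ]; push_cast; ring
      _ = 0 := hz2
    have factB : ∀ k : ZMod (2^(α+1)), ∃ x : ZMod (2^α), ψ x = 2 * k := by
      intro k
      refine ⟨((k.val : ℕ) : ZMod (2^α)), ?_⟩
      have hvv : (((k.val : ℕ) : ZMod (2^α))).val = k.val % 2^α := ZMod.val_natCast _ _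
      have hp2 : (2:ℕ)^(α+1) = 2*2^α := by ring
      have hm := Nat.div_add_mod k.val (2^α)
      have hgen : ∀ m : ℕ, 2 * m = 2^(α+1) * (m / 2^α) + 2 * (m % 2^α) := by
        intro m
        rw [hp2, mul_assoc]
        have := Nat.div_add_mod m (2^α)
        omega
      have hnat := hgen k.val
      have hz : ((2:ZMod (2^(α+1))))^(α+1) = 0 := by
        have := ZMod.natCast_self (2^(α+1)); push_cast at this; exact this
      have hcast : ((2 * k.val : ℕ) : ZMod (2^(α+1))) = ((2 * (k.val % 2^α) : ℕ) : ZMod (2^(α+1))) := by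
        rw [hnat]; push_cast [hz]; ring
      have hk : ((k.val : ℕ) : ZMod (2^(α+1))) = k := by
        simp [ZMod.natCast_val, ZMod.cast_id]
      simp only [hψ, hvv]
      calc 2 * ((k.val % 2^α : ℕ) : ZMod (2^(α+1)))
          = ((2 * (k.val % 2^α) : ℕ) : ZMod (2^(α+1))) := by push_cast; ring
      _ = ((2 * k.val : ℕ) : ZMod (2^(α+1))) := hcast.symm
      _ = 2 * k := by push_cast [hk]; ring
    set E : Finset (Fin r) := Finset.univ.image (fun x => c (ψ x)) with hE
    have hEcard : E.card ≤ α + 1 := by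
      apply ih
      rintro ⟨u, v, w, he, hc1, hc2, hc3⟩
      exact hnr ⟨ψ u, ψ v, ψ w, factA u v w he, hc1, hc2, hc3⟩
    have hpar : ∀ x : ZMod (2^(α+1)), (∃ k, x = 2*k) ∨ (∃ k, x = 2*k+1) := by
      intro x
      have hx : x = ((x.val : ℕ) : ZMod (2^(α+1))) := by
        simp [ZMod.natCast_val, ZMod.cast_id]
      rcases Nat.even_or_odd x.val with ⟨t, ht⟩ | ⟨t, ht⟩
      · exact Or.inl ⟨(t : ZMod (2^(α+1))), by rw [hx, ht]; push_cast; ring⟩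
      · exact Or.inr ⟨(t : ZMod (2^(α+1))), by rw [hx, ht]; push_cast; ring⟩
    have hevenE : ∀ k : ZMod (2^(α+1)), c (2 * k) ∈ E := by
      intro k
      obtain ⟨x', hx'⟩ := factB k
      rw [← hx']
      exact Finset.mem_image_of_mem _ (Finset.mem_univ _)
    have hodd : ∀ x : ZMod (2^(α+1)), c x ∉ E → ∃ k, x = 2*k+1 := by
      intro x hx
      rcases hpar x with ⟨k, hk⟩ | hk
      · exact absurd (hk ▸ hevenE k) hx
      · exact hk
    by_cases hall : ∀ x, c x ∈ E
    · have hsub : Finset.univ.image c ⊆ E := by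
        intro y hy
        obtain ⟨x, _, rfl⟩ := Finset.mem_image.mp hy
        exact hall x
      calc (Finset.univ.image c).card ≤ E.card := Finset.card_le_card hsub
      _ ≤ α + 2 := by omega
    · push_neg at hall
      obtain ⟨x₀, hx₀⟩ := hall
      obtain ⟨k₀, hk₀⟩ := hodd x₀ hx₀
      obtain ⟨e, he⟩ := h₁.add_odd h₂
      obtain ⟨w₃, hw₃⟩ := odd_isUnit_zmod (n := α+1) h₃
      have claim : ∀ z, c z ∉ E → c z = c x₀ := by
        intro z hz
        by_contra hne
        obtain ⟨k₁, hk₁⟩ := hodd z hz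
        have hcadd : (a₁ : ZMod (2^(α+1))) + a₂ = 2 * (e : ZMod (2^(α+1))) := by
          have := congrArg (fun t : ℤ => (t : ZMod (2^(α+1)))) he
          push_cast at this
          rw [this]; ring
        set m : ZMod (2^(α+1)) := (a₁:ZMod (2^(α+1)))*k₀ + (a₂:ZMod (2^(α+1)))*k₁ + e with hm
        have hsum2 : (a₁:ZMod (2^(α+1)))*x₀ + (a₂:ZMod (2^(α+1)))*z = 2*m := by
          rw [hk₀, hk₁, hm]
          linear_combination hcadd
        set w : ZMod (2^(α+1)) := ↑w₃⁻¹ * (-(2*m)) with hwdef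
        have heq : (a₁:ZMod (2^(α+1)))*x₀ + (a₂:ZMod (2^(α+1)))*z + (a₃:ZMod (2^(α+1)))*w = 0 := by
          rw [hsum2, hwdef, ← hw₃]
          rw [Units.mul_inv_cancel_left]
          ring
        have hwE : c w ∈ E := by
          have hw2 : w = 2 * (↑w₃⁻¹ * (-m)) := by rw [hwdef]; ring
          rw [hw2]; exact hevenE _
        exact hnr ⟨x₀, z, w, heq,
          fun h => hne h.symm,
          fun h => hx₀ (h ▸ hwE),
          fun h => hz (h ▸ hwE)⟩
      have hsub : Finset.univ.image c ⊆ insert (c x₀) E := by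
        intro y hy
        obtain ⟨x, _, rfl⟩ := Finset.mem_image.mp hy
        by_cases hcx : c x ∈ E
        · exact Finset.mem_insert_of_mem hcx
        · rw [claim x hcx]; exact Finset.mem_insert_self _ _
      calc (Finset.univ.image c).card ≤ (insert (c x₀) E).card := Finset.card_le_card hsub
      _ ≤ E.card + 1 := Finset.card_insert_le _ _
      _ ≤ α + 2 := by omega

theorem stmt_6 (α : ℕ) (hα : 1 ≤ α) (a₁ a₂ a₃ b : ℤ)
    (h₁ : Odd a₁) (h₂ : Odd a₂) (h₃ : Odd a₃) :
    rb (2 ^ α) (a₁ : ZMod (2 ^ α)) (a₂ : ZMod (2 ^ α)) (a₃ : ZMod (2 ^ α))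
      (b : ZMod (2 ^ α)) = α + 2 := by
  have ht : Odd (a₁ + a₂ + a₃) := (h₁.add_odd h₂).add_odd h₃
  obtain ⟨tu, htu⟩ := odd_isUnit_zmod (n := α) ht
  set x₀ : ZMod (2^α) := ↑tu⁻¹ * b with hx₀
  have htx₀ : ((a₁ + a₂ + a₃ : ℤ) : ZMod (2^α)) * x₀ = b := by
    rw [hx₀, ← htu, Units.mul_inv_cancel_left]
  have htx₀' : ((a₁ : ZMod (2^α)) + a₂ + a₃) * x₀ = b := by
    push_cast at htx₀; exact htx₀
  set S : Set ℕ := {r : ℕ | 0 < r ∧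
    ∀ c : ZMod (2^α) → Fin r, Function.Surjective c →
      HasRainbowSolution ((a₁ : ℤ) : ZMod (2^α)) ((a₂:ℤ) : ZMod (2^α)) ((a₃:ℤ) : ZMod (2^α)) (b : ZMod (2^α)) c} with hS
  -- upper bound : α + 2 ∈ S
  have hmem : (α + 2) ∈ S := by
    refine ⟨by omega, ?_⟩
    intro c hsurj
    by_contra hnrb
    set c₂ : ZMod (2^α) → Fin (α+2) := fun x => c (x + x₀) with hc₂
    have hnr2 : ¬ HasRainbowSolution ((a₁:ℤ) : ZMod (2^α)) ((a₂:ℤ) : ZMod (2^α)) ((a₃:ℤ) : ZMod (2^α)) 0 c₂ := by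
      rintro ⟨u₁, u₂, u₃, he, hc1, hc2, hc3⟩
      refine hnrb ⟨u₁ + x₀, u₂ + x₀, u₃ + x₀, ?_, hc1, hc2, hc3⟩
      linear_combination he + htx₀'
    have hle := homog h₁ h₂ h₃ α c₂ hnr2
    have hsurj2 : Function.Surjective c₂ := by
      intro y
      obtain ⟨x, hx⟩ := hsurj y
      exact ⟨x - x₀, by simp [hc₂, hx]⟩
    rw [Finset.image_univ_of_surjective hsurj2, Finset.card_univ, Fintype.card_fin] at hle
    omega
  -- lower bound : every r ∈ S satisfies α + 2 ≤ r
  have hlow : ∀ r ∈ S, α + 2 ≤ r := by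
    intro r hr
    by_contra hlt
    push_neg at hlt
    obtain ⟨hrpos, hrall⟩ := hr
    have hrle : r ≤ α + 1 := by omega
    set c : ZMod (2^α) → Fin r := fun s =>
      ⟨min (v2 α (s - x₀)) (r-1), by
        have := Nat.min_le_right (v2 α (s - x₀)) (r-1); omega⟩ with hc
    have hsurj : Function.Surjective c := by
      rintro ⟨i, hi⟩
      by_cases hi' : i < r - 1
      · refine ⟨x₀ + ((2:ZMod (2^α)))^i, ?_⟩
        have hiα : i < α := by omega
        have hpow : ((2:ZMod (2^α)))^i = ((2^i : ℕ) : ZMod (2^α)) := by push_cast; ring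
        have hval : (((2^i : ℕ) : ZMod (2^α))).val = 2^i := by
          rw [ZMod.val_natCast, Nat.mod_eq_of_lt (Nat.pow_lt_pow_right one_lt_two hiα)]
        have hne : ((2:ZMod (2^α)))^i ≠ 0 := by
          rw [hpow]
          intro h0
          have := (ZMod.val_eq_zero _).mpr h0
          rw [hval] at this
          exact absurd this (by positivity)
        have hv : v2 α (x₀ + ((2:ZMod (2^α)))^i - x₀) = i := by
          rw [add_sub_cancel_left]
          simp only [v2, hne, if_false]
          rw [hpow, hval]
          exact padicValNat.prime_pow i
        apply Fin.ext
        simp only [hc, hv]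
        omega
      · have hieq : i = r - 1 := by omega
        refine ⟨x₀, ?_⟩
        have hv : v2 α (x₀ - x₀) = α := by simp [v2]
        apply Fin.ext
        simp only [hc, hv]
        omega
    obtain ⟨s₁, s₂, s₃, heq, hc12, hc13, hc23⟩ := hrall c hsurj
    set u₁ := s₁ - x₀ with hu₁
    set u₂ := s₂ - x₀ with hu₂
    set u₃ := s₃ - x₀ with hu₃
    have hequ : (a₁:ZMod (2^α))*u₁ + (a₂:ZMod (2^α))*u₂ + (a₃:ZMod (2^α))*u₃ = 0 := by
      rw [hu₁, hu₂, hu₃]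
      linear_combination heq - htx₀'
    set k₁ := min (v2 α u₁) (r-1) with hk₁
    set k₂ := min (v2 α u₂) (r-1) with hk₂
    set k₃ := min (v2 α u₃) (r-1) with hk₃
    have hne12 : k₁ ≠ k₂ := fun h => hc12 (Fin.ext h)
    have hne13 : k₁ ≠ k₃ := fun h => hc13 (Fin.ext h)
    have hne23 : k₂ ≠ k₃ := fun h => hc23 (Fin.ext h)
    have hm1 : k₁ = v2 α u₁ ∨ k₁ = r - 1 := min_choice _ _
    have hm2 : k₂ = v2 α u₂ ∨ k₂ = r - 1 := min_choice _ _
    have hm3 : k₃ = v2 α u₃ ∨ k₃ = r - 1 := min_choice _ _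
    have hl1 : k₁ ≤ v2 α u₁ ∧ k₁ ≤ r - 1 := ⟨Nat.min_le_left _ _, Nat.min_le_right _ _⟩
    have hl2 : k₂ ≤ v2 α u₂ ∧ k₂ ≤ r - 1 := ⟨Nat.min_le_left _ _, Nat.min_le_right _ _⟩
    have hl3 : k₃ ≤ v2 α u₃ ∧ k₃ ≤ r - 1 := ⟨Nat.min_le_left _ _, Nat.min_le_right _ _⟩
    have htri : (k₁ < k₂ ∧ k₁ < k₃) ∨ (k₂ < k₁ ∧ k₂ < k₃) ∨ (k₃ < k₁ ∧ k₃ < k₂) := by omega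
    rcases htri with ⟨ha, hb⟩ | ⟨ha, hb⟩ | ⟨ha, hb⟩
    · refine key α h₁ h₂ h₃ u₁ u₂ u₃ ?_ ?_ ?_ (by linear_combination hequ)
      · omega
      · omega
      · omega
    · refine key α h₂ h₁ h₃ u₂ u₁ u₃ ?_ ?_ ?_ (by linear_combination hequ)
      · omega
      · omega
      · omega
    · refine key α h₃ h₁ h₂ u₃ u₁ u₂ ?_ ?_ ?_ (by linear_combination hequ)
      · omega
      · omega
      · omega
  have hSne : S.Nonempty := ⟨α + 2, hmem⟩
  exact Nat.le_antisymm (Nat.sInf_le hmem) (hlow _ (Nat.sInf_mem hSne))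
end

section
/- Let t ≥ 2 and u ≥ 1 be integers and let a1, a2, a3, b be integers with a1·a2·a3 a unit of Z_{ut}. Let c be a coloring of Z_{ut} with no rainbow solution to eq(a1,a2,a3,b), and suppose there is a color 'yellow' not used by c. For i ∈ Z_t let P_i = { c(z) : z ∈ Z_{ut}, z ≡ i (mod t) } denote the palette of the residue class of i modulo t. Suppose there exists j ∈ Z_t such that |P_i \ P_j| ≤ 1 for every i ∈ Z_t. Then the coloring ĉ of Z_t defined by ĉ(i) = yellow if P_i ⊆ P_j, and ĉ(i) = the unique element of P_i \ P_j otherwise, is well-defined and has no rainbow solution to eq(a1,a2,a3,b) in Z_t. -/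
lemma stmt_12_aux (t u : ℕ) (A₁ A₂ A₃ b : ℤ)
    (hA₁ : IsUnit ((A₁ : ℤ) : ZMod (u * t)))
    (Color : Type) (c : ZMod (u * t) → Color) (yellow : Color)
    (hrf : ∀ z₁ z₂ z₃ : ZMod (u * t),
      (A₁ : ZMod (u * t)) * z₁ + A₂ * z₂ + A₃ * z₃ = b →
      ¬ (c z₁ ≠ c z₂ ∧ c z₁ ≠ c z₃ ∧ c z₂ ≠ c z₃))
    (P : ZMod t → Set Color)
    (hP : ∀ i, P i = c '' {z | ZMod.castHom (dvd_mul_left t u) (ZMod t) z = i})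
    (j : ZMod t) (hj : ∀ i, (P i \ P j).Subsingleton)
    (cHat : ZMod t → Color)
    (hcHat₁ : ∀ i, P i ⊆ P j → cHat i = yellow)
    (hcHat₂ : ∀ i, ¬ P i ⊆ P j → cHat i ∈ P i \ P j)
    (s₁ s₂ s₃ : ZMod t)
    (heq : (A₁ : ZMod t) * s₁ + A₂ * s₂ + A₃ * s₃ = b)
    (h2 : cHat s₂ ≠ yellow) (h3 : cHat s₃ ≠ yellow)
    (h12 : cHat s₁ ≠ cHat s₂) (h13 : cHat s₁ ≠ cHat s₃)
    (h23 : cHat s₂ ≠ cHat s₃) : False := by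
  set φ := ZMod.castHom (dvd_mul_left t u) (ZMod t) with hφ
  -- get z₂
  have hn2 : ¬ P s₂ ⊆ P j := fun h => h2 (hcHat₁ _ h)
  have hn3 : ¬ P s₃ ⊆ P j := fun h => h3 (hcHat₁ _ h)
  obtain ⟨hm2, hnj2⟩ := hcHat₂ _ hn2
  obtain ⟨hm3, hnj3⟩ := hcHat₂ _ hn3
  rw [hP s₂] at hm2
  rw [hP s₃] at hm3
  obtain ⟨z₂, hz₂, hcz₂⟩ := hm2
  obtain ⟨z₃, hz₃, hcz₃⟩ := hm3
  have hz₂' : φ z₂ = s₂ := hz₂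
  have hz₃' : φ z₃ = s₃ := hz₃
  -- define z₁
  set v : ZMod (u * t) := ↑hA₁.unit⁻¹ with hv
  have hvA : (A₁ : ZMod (u * t)) * v = 1 := by
    rw [hv]
    exact_mod_cast hA₁.unit.mul_inv
  set z₁ : ZMod (u * t) := v * ((b : ZMod (u * t)) - A₂ * z₂ - A₃ * z₃) with hz₁def
  have heq' : (A₁ : ZMod (u * t)) * z₁ + A₂ * z₂ + A₃ * z₃ = b := by
    rw [hz₁def, ← mul_assoc, hvA]; ring
  -- cast of z₁
  have hA₁t : IsUnit ((A₁ : ℤ) : ZMod t) := by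
    have := hA₁.map φ
    rwa [map_intCast] at this
  have hz₁ : φ z₁ = s₁ := by
    have h1 : (A₁ : ZMod t) * φ z₁ = (A₁ : ZMod t) * s₁ := by
      have := congrArg φ heq'
      simp only [map_add, map_mul, map_intCast, hz₂', hz₃'] at this
      have h2 := heq
      linear_combination this - h2
    exact hA₁t.mul_left_cancel h1
  have hcz₁P : c z₁ ∈ P s₁ := by
    rw [hP s₁]; exact ⟨z₁, hz₁, rfl⟩
  -- case split
  by_cases hcase : c z₁ ∈ P j
  · exact hrf z₁ z₂ z₃ heq'
      ⟨by rw [hcz₂]; exact fun h => hnj2 (h ▸ hcase),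
       by rw [hcz₃]; exact fun h => hnj3 (h ▸ hcase),
       by rw [hcz₂, hcz₃]; exact h23⟩
  · have hmem : c z₁ ∈ P s₁ \ P j := ⟨hcz₁P, hcase⟩
    have hn1 : ¬ P s₁ ⊆ P j := fun h => hcase (h hcz₁P)
    have : c z₁ = cHat s₁ := hj s₁ hmem (hcHat₂ _ hn1)
    exact hrf z₁ z₂ z₃ heq'
      ⟨by rw [this, hcz₂]; exact h12,
       by rw [this, hcz₃]; exact h13,
       by rw [hcz₂, hcz₃]; exact h23⟩

theorem stmt_12 (t u : ℕ) (ht : 2 ≤ t) (hu : 1 ≤ u) (a₁ a₂ a₃ b : ℤ)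
    (ha : IsUnit ((a₁ * a₂ * a₃ : ℤ) : ZMod (u * t)))
    (Color : Type) (c : ZMod (u * t) → Color) (yellow : Color)
    (hyellow : ∀ z, c z ≠ yellow)
    (hrf : ¬ ∃ s₁ s₂ s₃ : ZMod (u * t),
      (a₁ : ZMod (u * t)) * s₁ + a₂ * s₂ + a₃ * s₃ = b ∧
      c s₁ ≠ c s₂ ∧ c s₁ ≠ c s₃ ∧ c s₂ ≠ c s₃)
    (P : ZMod t → Set Color)
    (hP : ∀ i, P i = c '' {z | ZMod.castHom (dvd_mul_left t u) (ZMod t) z = i})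
    (j : ZMod t) (hj : ∀ i, (P i \ P j).Subsingleton)
    (cHat : ZMod t → Color)
    (hcHat₁ : ∀ i, P i ⊆ P j → cHat i = yellow)
    (hcHat₂ : ∀ i, ¬ P i ⊆ P j → cHat i ∈ P i \ P j) :
    (∀ i, ¬ P i ⊆ P j → ∃! x, x ∈ P i \ P j) ∧
    ¬ ∃ s₁ s₂ s₃ : ZMod t,
      (a₁ : ZMod t) * s₁ + a₂ * s₂ + a₃ * s₃ = b ∧
      cHat s₁ ≠ cHat s₂ ∧ cHat s₁ ≠ cHat s₃ ∧ cHat s₂ ≠ cHat s₃ := by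
  have hu1 : IsUnit ((a₁ : ℤ) : ZMod (u * t)) := by
    have : ((a₁ * a₂ * a₃ : ℤ) : ZMod (u * t)) = (a₁ : ZMod (u*t)) * ((a₂ * a₃ : ℤ) : ZMod (u*t)) := by
      push_cast; ring
    rw [this] at ha
    exact isUnit_of_mul_isUnit_left ha
  have hu2 : IsUnit ((a₂ : ℤ) : ZMod (u * t)) := by
    have : ((a₁ * a₂ * a₃ : ℤ) : ZMod (u * t)) = (a₂ : ZMod (u*t)) * ((a₁ * a₃ : ℤ) : ZMod (u*t)) := by
      push_cast; ring
    rw [this] at ha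
    exact isUnit_of_mul_isUnit_left ha
  have hu3 : IsUnit ((a₃ : ℤ) : ZMod (u * t)) := by
    have : ((a₁ * a₂ * a₃ : ℤ) : ZMod (u * t)) = (a₃ : ZMod (u*t)) * ((a₁ * a₂ : ℤ) : ZMod (u*t)) := by
      push_cast; ring
    rw [this] at ha
    exact isUnit_of_mul_isUnit_left ha
  push_neg at hrf
  constructor
  · intro i hi
    exact ⟨cHat i, hcHat₂ i hi, fun y hy => hj i hy (hcHat₂ i hi)⟩
  · rintro ⟨s₁, s₂, s₃, heq, h12, h13, h23⟩
    by_cases h1 : cHat s₁ = yellow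
    · exact stmt_12_aux t u a₁ a₂ a₃ b hu1 Color c yellow
        (fun z₁ z₂ z₃ h => by
          rintro ⟨d12, d13, d23⟩; exact d23 (hrf z₁ z₂ z₃ h d12 d13))
        P hP j hj cHat hcHat₁ hcHat₂ s₁ s₂ s₃ heq
        (fun h => h12 (h1.trans h.symm)) (fun h => h13 (h1.trans h.symm)) h12 h13 h23
    · by_cases h2 : cHat s₂ = yellow
      · exact stmt_12_aux t u a₂ a₁ a₃ b hu2 Color c yellow
          (fun z₁ z₂ z₃ h => by
            rintro ⟨d12, d13, d23⟩
            exact d13 (hrf z₂ z₁ z₃ (by linear_combination h) (Ne.symm d12) d23))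
          P hP j hj cHat hcHat₁ hcHat₂ s₂ s₁ s₃ (by linear_combination heq)
          h1 (fun h => h23 (h2.trans h.symm)) (Ne.symm h12) h23 h13
      · by_cases h3 : cHat s₃ = yellow
        · exact stmt_12_aux t u a₃ a₁ a₂ b hu3 Color c yellow
            (fun z₁ z₂ z₃ h => by
              rintro ⟨d12, d13, d23⟩
              exact d13 ((hrf z₂ z₃ z₁ (by linear_combination h) d23 (Ne.symm d12)).symm))
            P hP j hj cHat hcHat₁ hcHat₂ s₃ s₁ s₂ (by linear_combination heq)
            h1 h2 (Ne.symm h13) (Ne.symm h23) h12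
        · exact stmt_12_aux t u a₁ a₂ a₃ b hu1 Color c yellow
            (fun z₁ z₂ z₃ h => by
              rintro ⟨d12, d13, d23⟩
              exact d23 (hrf z₁ z₂ z₃ h d12 d13))
            P hP j hj cHat hcHat₁ hcHat₂ s₁ s₂ s₃ heq h2 h3 h12 h13 h23
end

section
/- Let u, t be positive integers and let a1, a2, a3, b be integers with a1·a2·a3 a unit of Z_{ut}. Let c be a coloring of Z_{ut} with no rainbow solution to eq(a1,a2,a3,b), and for each i with 0 ≤ i ≤ u-1 let P_i = { c(z) : z ∈ Z_{ut}, z ≡ i (mod u) } denote the palette of the residue class i modulo u. If |P_0| ≥ |P_i| for all 0 ≤ i ≤ u-1, then |P_i \ P_0| ≤ 1 for all 0 ≤ i ≤ u-1. -/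
theorem stmt_13 (u t : ℕ) (hu : 0 < u) (ht : 0 < t) (a₁ a₂ a₃ b : ℤ)
    (ha : IsUnit ((a₁ * a₂ * a₃ : ℤ) : ZMod (u * t)))
    (Color : Type) (c : ZMod (u * t) → Color)
    (hrf : ¬ ∃ s₁ s₂ s₃ : ZMod (u * t),
      (a₁ : ZMod (u * t)) * s₁ + a₂ * s₂ + a₃ * s₃ = b ∧
      c s₁ ≠ c s₂ ∧ c s₁ ≠ c s₃ ∧ c s₂ ≠ c s₃)
    (P : ZMod u → Set Color)
    (hP : ∀ i, P i = c '' {z | ZMod.castHom (dvd_mul_right u t) (ZMod u) z = i})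
    (hmax : ∀ i, (P i).ncard ≤ (P 0).ncard) :
    ∀ i, (P i \ P 0).ncard ≤ 1 := by
  haveI : NeZero (u * t) := ⟨Nat.mul_ne_zero hu.ne' ht.ne'⟩
  set π : ZMod (u * t) →+* ZMod u := ZMod.castHom (dvd_mul_right u t) (ZMod u) with hπdef
  -- units
  have ha12 : IsUnit ((a₁ * a₂ : ℤ) : ZMod (u * t)) := by
    apply isUnit_of_mul_isUnit_left (y := ((a₃ : ℤ) : ZMod (u * t)))
    rw [← Int.cast_mul]; exact ha
  have ha1 : IsUnit ((a₁ : ℤ) : ZMod (u * t)) := by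
    apply isUnit_of_mul_isUnit_left (y := ((a₂ : ℤ) : ZMod (u * t)))
    rw [← Int.cast_mul]; exact ha12
  have ha2 : IsUnit ((a₂ : ℤ) : ZMod (u * t)) := by
    apply isUnit_of_mul_isUnit_right (x := ((a₁ : ℤ) : ZMod (u * t)))
    rw [← Int.cast_mul]; exact ha12
  have ha3 : IsUnit ((a₃ : ℤ) : ZMod (u * t)) := by
    apply isUnit_of_mul_isUnit_right (x := ((a₁ * a₂ : ℤ) : ZMod (u * t)))
    rw [← Int.cast_mul]; exact ha
  have ha1u : IsUnit ((a₁ : ℤ) : ZMod u) := by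
    have := ha1.map π; rwa [map_intCast] at this
  have ha2u : IsUnit ((a₂ : ℤ) : ZMod u) := by
    have := ha2.map π; rwa [map_intCast] at this
  have ha3u : IsUnit ((a₃ : ℤ) : ZMod u) := by
    have := ha3.map π; rwa [map_intCast] at this
  -- rainbow-free key lemma
  have hK : ∀ s₁ s₂ s₃ : ZMod (u * t),
      (a₁ : ZMod (u * t)) * s₁ + a₂ * s₂ + a₃ * s₃ = b →
      c s₁ = c s₂ ∨ c s₁ = c s₃ ∨ c s₂ = c s₃ := by
    intro s₁ s₂ s₃ heq
    by_contra h
    push_neg at h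
    exact hrf ⟨s₁, s₂, s₃, heq, h.1, h.2.1, h.2.2⟩
  -- membership lemma
  have hmem : ∀ s : ZMod (u * t), c s ∈ P (π s) := by
    intro s; rw [hP]; exact ⟨s, rfl, rfl⟩
  -- projected equation
  have hπeq : ∀ s₁ s₂ s₃ : ZMod (u * t),
      (a₁ : ZMod (u * t)) * s₁ + a₂ * s₂ + a₃ * s₃ = b →
      (a₁ : ZMod u) * π s₁ + (a₂ : ZMod u) * π s₂ + (a₃ : ZMod u) * π s₃ = (b : ZMod u) := by
    intro s₁ s₂ s₃ h
    have := congrArg π h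
    simpa using this
  -- cancellation lemmas
  have hc1 : ∀ s₁ s₂ s₃ s₁' s₂' s₃' : ZMod (u * t),
      (a₁ : ZMod (u * t)) * s₁ + a₂ * s₂ + a₃ * s₃ = b →
      (a₁ : ZMod (u * t)) * s₁' + a₂ * s₂' + a₃ * s₃' = b →
      π s₂ = π s₂' → π s₃ = π s₃' → π s₁ = π s₁' := by
    intro s₁ s₂ s₃ s₁' s₂' s₃' h h' h2 h3
    have e := hπeq _ _ _ h
    have e' := hπeq _ _ _ h'
    rw [h2, h3] at e
    exact ha1u.mul_left_cancel (by linear_combination e - e')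
  have hc2 : ∀ s₁ s₂ s₃ s₁' s₂' s₃' : ZMod (u * t),
      (a₁ : ZMod (u * t)) * s₁ + a₂ * s₂ + a₃ * s₃ = b →
      (a₁ : ZMod (u * t)) * s₁' + a₂ * s₂' + a₃ * s₃' = b →
      π s₁ = π s₁' → π s₃ = π s₃' → π s₂ = π s₂' := by
    intro s₁ s₂ s₃ s₁' s₂' s₃' h h' h1 h3
    have e := hπeq _ _ _ h
    have e' := hπeq _ _ _ h'
    rw [h1, h3] at e
    exact ha2u.mul_left_cancel (by linear_combination e - e')
  have hc3 : ∀ s₁ s₂ s₃ s₁' s₂' s₃' : ZMod (u * t),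
      (a₁ : ZMod (u * t)) * s₁ + a₂ * s₂ + a₃ * s₃ = b →
      (a₁ : ZMod (u * t)) * s₁' + a₂ * s₂' + a₃ * s₃' = b →
      π s₁ = π s₁' → π s₂ = π s₂' → π s₃ = π s₃' := by
    intro s₁ s₂ s₃ s₁' s₂' s₃' h h' h1 h2
    have e := hπeq _ _ _ h
    have e' := hπeq _ _ _ h'
    rw [h1, h2] at e
    exact ha3u.mul_left_cancel (by linear_combination e - e')
  -- solving for each coordinate
  have hsol1 : ∀ s₂ s₃ : ZMod (u * t),
      (a₁ : ZMod (u * t)) * (↑ha1.unit⁻¹ * ((b : ZMod (u * t)) - a₂ * s₂ - a₃ * s₃))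
        + a₂ * s₂ + a₃ * s₃ = b := by
    intro s₂ s₃
    have k := ha1.mul_val_inv
    linear_combination ((b : ZMod (u * t)) - a₂ * s₂ - a₃ * s₃) * k
  have hsol2 : ∀ s₁ s₃ : ZMod (u * t),
      (a₁ : ZMod (u * t)) * s₁
        + a₂ * (↑ha2.unit⁻¹ * ((b : ZMod (u * t)) - a₁ * s₁ - a₃ * s₃)) + a₃ * s₃ = b := by
    intro s₁ s₃
    have k := ha2.mul_val_inv
    linear_combination ((b : ZMod (u * t)) - a₁ * s₁ - a₃ * s₃) * k
  have hsol3 : ∀ s₁ s₂ : ZMod (u * t),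
      (a₁ : ZMod (u * t)) * s₁ + a₂ * s₂
        + a₃ * (↑ha3.unit⁻¹ * ((b : ZMod (u * t)) - a₁ * s₁ - a₂ * s₂)) = b := by
    intro s₁ s₂
    have k := ha3.mul_val_inv
    linear_combination ((b : ZMod (u * t)) - a₁ * s₁ - a₂ * s₂) * k
  -- finiteness
  have hfin : ∀ i, (P i).Finite := by
    intro i; rw [hP]; exact (Set.toFinite _).image c
  -- main proof
  intro i
  by_contra hcon
  push_neg at hcon
  obtain ⟨x, y, hx, hy, hxy⟩ :=
    (Set.one_lt_ncard_iff ((hfin i).diff (t := P 0))).mp hcon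
  have hxPi : x ∈ P i := hx.1
  have hxP0 : x ∉ P 0 := hx.2
  have hyPi : y ∈ P i := hy.1
  have hyP0 : y ∉ P 0 := hy.2
  rw [hP] at hxPi hyPi
  obtain ⟨zx, hzx, hcx⟩ := hxPi
  obtain ⟨zy, hzy, hcy⟩ := hyPi
  simp only [Set.mem_setOf_eq] at hzx hzy
  -- reference solution: s₂ = zx, s₃ = 0, defining the class j
  set s1ref : ZMod (u * t) := ↑ha1.unit⁻¹ * ((b : ZMod (u * t)) - a₂ * zx - a₃ * 0) with hs1ref
  have href : (a₁ : ZMod (u * t)) * s1ref + a₂ * zx + a₃ * 0 = b := hsol1 zx 0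
  set j : ZMod u := π s1ref with hjdef
  -- colors of class-0 elements are in P 0
  have h0 : ∀ s : ZMod (u * t), π s = 0 → c s ∈ P 0 := by
    intro s hs; have := hmem s; rwa [hs] at this
  -- Lemma A : P j ⊆ P 0
  have hA : ∀ s₁ : ZMod (u * t), π s₁ = j → c s₁ ∈ P 0 := by
    intro s₁ h1
    set s₃ : ZMod (u * t) := ↑ha3.unit⁻¹ * ((b : ZMod (u * t)) - a₁ * s₁ - a₂ * zx) with hs3
    have heq : (a₁ : ZMod (u * t)) * s₁ + a₂ * zx + a₃ * s₃ = b := hsol3 s₁ zx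
    have hπ3 : π s₃ = 0 := by
      have := hc3 s₁ zx s₃ s1ref zx 0 heq href (h1.trans hjdef) rfl
      simpa using this
    set s₃' : ZMod (u * t) := ↑ha3.unit⁻¹ * ((b : ZMod (u * t)) - a₁ * s₁ - a₂ * zy) with hs3'
    have heq' : (a₁ : ZMod (u * t)) * s₁ + a₂ * zy + a₃ * s₃' = b := hsol3 s₁ zy
    have hπ3' : π s₃' = 0 := by
      have := hc3 s₁ zy s₃' s1ref zx 0 heq' href (h1.trans hjdef) (hzy.trans hzx.symm)
      simpa using this
    have k := hK s₁ zx s₃ heq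
    have k' := hK s₁ zy s₃' heq'
    rcases k with k | k | k
    · rcases k' with k' | k' | k'
      · exact absurd (by rw [← hcx, ← hcy, ← k, ← k']) hxy
      · rw [k']; exact h0 _ hπ3'
      · exact absurd (hcy ▸ k' ▸ h0 _ hπ3') hyP0
    · rw [k]; exact h0 _ hπ3
    · exact absurd (hcx ▸ k ▸ h0 _ hπ3) hxP0
  -- Lemma B : P 0 ⊆ P j
  have hB : ∀ s₃ : ZMod (u * t), π s₃ = 0 → ∃ s₁, π s₁ = j ∧ c s₁ = c s₃ := by
    intro s₃ h3
    set s₁ : ZMod (u * t) := ↑ha1.unit⁻¹ * ((b : ZMod (u * t)) - a₂ * zx - a₃ * s₃) with hs1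
    have heq : (a₁ : ZMod (u * t)) * s₁ + a₂ * zx + a₃ * s₃ = b := hsol1 zx s₃
    have hπ1 : π s₁ = j := by
      exact hc1 s₁ zx s₃ s1ref zx 0 heq href rfl (by simpa using h3)
    refine ⟨s₁, hπ1, ?_⟩
    have hne : c s₁ ≠ x := fun h => hxP0 (h ▸ hA s₁ hπ1)
    rcases hK s₁ zx s₃ heq with k | k | k
    · exact absurd (k.trans hcx) hne
    · exact k
    · exact absurd (hcx ▸ k ▸ h0 _ h3) hxP0
  -- Lemma C : for distinct w w' ∈ P 0, one of them lies in P i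
  have hC : ∀ w ∈ P 0, ∀ w' ∈ P 0, w ≠ w' → w ∈ P i ∨ w' ∈ P i := by
    intro w hw w' hw' hww'
    rw [hP] at hw hw'
    obtain ⟨zw, hzw, hczw⟩ := hw
    obtain ⟨zw', hzw', hczw'⟩ := hw'
    simp only [Set.mem_setOf_eq] at hzw hzw'
    obtain ⟨s₁, hπ1, hcs1⟩ := hB zw hzw
    set s₂ : ZMod (u * t) := ↑ha2.unit⁻¹ * ((b : ZMod (u * t)) - a₁ * s₁ - a₃ * zw') with hs2
    have heq : (a₁ : ZMod (u * t)) * s₁ + a₂ * s₂ + a₃ * zw' = b := hsol2 s₁ zw'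
    have hπ2 : π s₂ = i := by
      have := hc2 s₁ s₂ zw' s1ref zx 0 heq href hπ1 (by simpa using hzw')
      rwa [hzx] at this
    have hmem2 := hmem s₂
    rw [hπ2] at hmem2
    rcases hK s₁ s₂ zw' heq with k | k | k
    · left; rw [← hczw, ← hcs1, k]; exact hmem2
    · exact absurd (by rw [← hczw, ← hczw', ← hcs1, k]) hww'
    · right; rw [← hczw', ← k]; exact hmem2
  -- counting
  have hd1 : (P 0 \ P i).ncard ≤ 1 := by
    apply (Set.ncard_le_one ((hfin 0).diff (t := P i))).mpr
    intro a ha' b' hb'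
    by_contra hab
    rcases hC a ha'.1 b' hb'.1 hab with h | h
    · exact ha'.2 h
    · exact hb'.2 h
  have hcard0 : (P 0 ∩ P i).ncard + (P 0 \ P i).ncard = (P 0).ncard :=
    Set.ncard_inter_add_ncard_diff_eq_ncard (P 0) (P i) (hfin 0)
  have hsub : insert x (insert y (P 0 ∩ P i)) ⊆ P i := by
    intro a ha'
    rcases ha' with rfl | rfl | ha'
    · exact hx.1
    · exact hy.1
    · exact ha'.2
  have hxnot : x ∉ insert y (P 0 ∩ P i) := by
    intro h
    rcases h with rfl | h
    · exact hxy rfl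
    · exact hxP0 h.1
  have hynot : y ∉ P 0 ∩ P i := fun h => hyP0 h.1
  have hfin' : (P 0 ∩ P i).Finite := (hfin 0).inter_of_left _
  have hcount : (P 0 ∩ P i).ncard + 2 ≤ (P i).ncard := by
    have h1 : (insert x (insert y (P 0 ∩ P i))).ncard = (P 0 ∩ P i).ncard + 2 := by
      rw [Set.ncard_insert_of_notMem hxnot (hfin'.insert y),
        Set.ncard_insert_of_notMem hynot hfin']
    rw [← h1]
    exact Set.ncard_le_ncard hsub (hfin i)
  have := hmax i
  omega
end
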